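/- Let B be a separable Banach space over ℂ and let (hₙ) be a sequence in B with ‖hₙ‖ = 1 for all n whose linear span is dense in B. Let (fₙ) be continuous functions ℝ → ℂ with |fₙ(s)| ≤ a(n) for all s, where Σₙ a(n) < ∞, and define ψ(s) = Σₙ fₙ(s) hₙ and φ(s) = Σₙ fₙ(s) eₙ ∈ ℓ¹(ℕ, ℂ). If g ∈ C(ℝ) is such that g·e₁ lies in τ(φ) ⊆ C(ℝ, ℓ¹(ℕ, ℂ)), then g·h₁ lies in τ(ψ) ⊆ C(ℝ, B). -/
import Mathlib


open Topology

/-- The translate of a continuous function `φ : ℝ → B` by `t`, i.e. `s ↦ φ (s + t)`. -/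
noncomputable def translateBy {B : Type*} [NormedAddCommGroup B] [NormedSpace ℂ B]
    (φ : C(ℝ, B)) (t : ℝ) : C(ℝ, B) :=
  φ.comp ⟨fun s => s + t, by continuity⟩

/-- `tau φ` is the closure in `C(ℝ, B)` (compact-open topology) of the linear span of
all translates of `φ`. -/
noncomputable def tau {B : Type*} [NormedAddCommGroup B] [NormedSpace ℂ B]
    (φ : C(ℝ, B)) : Set C(ℝ, B) :=
  closure (Submodule.span ℂ (Set.range (translateBy φ)) : Set C(ℝ, B))

section Aux

variable {B : Type*} [NormedAddCommGroup B] [NormedSpace ℂ B] [CompleteSpace B]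

lemma aux_norm_summable (h : ℕ → B) (hh : ∀ n, ‖h n‖ = 1)
    (x : lp (fun _ : ℕ => ℂ) 1) :
    Summable (fun n => ‖(x : ∀ _ : ℕ, ℂ) n • h n‖) := by
  have hx : Summable (fun n => ‖(x : ∀ _ : ℕ, ℂ) n‖) := by
    have := lp.memℓp x
    rw [memℓp_gen_iff (by norm_num : (0:ℝ) < (1 : ENNReal).toReal)] at this
    simpa using this
  refine hx.congr fun n => ?_
  rw [norm_smul, hh n, mul_one]

lemma aux_summable (h : ℕ → B) (hh : ∀ n, ‖h n‖ = 1)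
    (x : lp (fun _ : ℕ => ℂ) 1) :
    Summable (fun n => (x : ∀ _ : ℕ, ℂ) n • h n) :=
  (aux_norm_summable h hh x).of_norm

/-- The linear map `ℓ¹ → B` sending `eₙ` to `hₙ`. -/
noncomputable def Tlin (h : ℕ → B) (hh : ∀ n, ‖h n‖ = 1) :
    lp (fun _ : ℕ => ℂ) 1 →ₗ[ℂ] B where
  toFun x := ∑' n, (x : ∀ _ : ℕ, ℂ) n • h n
  map_add' x y := by
    rw [← Summable.tsum_add (aux_summable h hh x) (aux_summable h hh y)]
    refine tsum_congr fun n => ?_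
    rw [lp.coeFn_add, Pi.add_apply, add_smul]
  map_smul' c x := by
    rw [RingHom.id_apply, ← tsum_const_smul'' c]
    refine tsum_congr fun n => ?_
    rw [lp.coeFn_smul, Pi.smul_apply, smul_assoc]

lemma Tlin_bound (h : ℕ → B) (hh : ∀ n, ‖h n‖ = 1) (x : lp (fun _ : ℕ => ℂ) 1) :
    ‖Tlin h hh x‖ ≤ 1 * ‖x‖ := by
  rw [one_mul]
  have h1 : ‖Tlin h hh x‖ ≤ ∑' n, ‖(x : ∀ _ : ℕ, ℂ) n • h n‖ :=
    norm_tsum_le_tsum_norm (aux_norm_summable h hh x)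
  refine h1.trans_eq ?_
  rw [lp.norm_eq_tsum_rpow (by norm_num) x]
  simp [norm_smul, hh]

/-- The continuous linear map `ℓ¹ → B` sending `eₙ` to `hₙ`. -/
noncomputable def Tclm (h : ℕ → B) (hh : ∀ n, ‖h n‖ = 1) :
    lp (fun _ : ℕ => ℂ) 1 →L[ℂ] B :=
  LinearMap.mkContinuous (Tlin h hh) 1 (Tlin_bound h hh)

end Aux

/-- Let `B` be a separable Banach space, `(hₙ)` unit vectors with dense span,
`fₙ : ℝ → ℂ` continuous with `|fₙ(s)| ≤ a n` and `∑ a n < ∞`. Set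
`ψ(s) = ∑ₙ fₙ(s) hₙ` and `φ(s) = (fₙ(s))ₙ ∈ ℓ¹`. If `g·e₁ ∈ τ(φ)`, then
`g·h₁ ∈ τ(ψ)`. (The first index is `0` here.) -/
theorem smul_mem_tau_of_smul_single_mem_tau
    (B : Type*) [NormedAddCommGroup B] [NormedSpace ℂ B] [CompleteSpace B]
    [TopologicalSpace.SeparableSpace B]
    (h : ℕ → B) (hh : ∀ n, ‖h n‖ = 1)
    (hdense : Dense (Submodule.span ℂ (Set.range h) : Set B))
    (f : ℕ → ℝ → ℂ) (hf : ∀ n, Continuous (f n))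
    (a : ℕ → ℝ) (hbound : ∀ n s, ‖f n s‖ ≤ a n) (hsum : Summable a)
    (ψ : C(ℝ, B)) (hψ : ∀ s : ℝ, ψ s = ∑' n, f n s • h n)
    (φ : C(ℝ, lp (fun _ : ℕ => ℂ) 1)) (hφ : ∀ (s : ℝ) (n : ℕ), φ s n = f n s)
    (g : C(ℝ, ℂ))
    (G : C(ℝ, lp (fun _ : ℕ => ℂ) 1)) (hG : ∀ s : ℝ, G s = lp.single 1 0 (g s))
    (hGmem : G ∈ tau φ) :
    (⟨fun s => g s • h 0, by continuity⟩ : C(ℝ, B)) ∈ tau ψ := by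
  set T : lp (fun _ : ℕ => ℂ) 1 →L[ℂ] B := Tclm h hh with hT
  have hTval : ∀ x : lp (fun _ : ℕ => ℂ) 1, T x = ∑' n, (x : ∀ _ : ℕ, ℂ) n • h n :=
    fun x => rfl
  -- post-composition with T
  set Φ : C(ℝ, lp (fun _ : ℕ => ℂ) 1) → C(ℝ, B) :=
    fun u => (⟨T, T.continuous⟩ : C(lp (fun _ : ℕ => ℂ) 1, B)).comp u with hΦ
  have hΦcont : Continuous Φ := ContinuousMap.continuous_postcomp _
  -- Φ as a linear map
  set L : C(ℝ, lp (fun _ : ℕ => ℂ) 1) →ₗ[ℂ] C(ℝ, B) :=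
    { toFun := Φ
      map_add' := fun u v => by ext s; exact T.map_add (u s) (v s)
      map_smul' := fun c u => by ext s; exact T.map_smul c (u s) } with hL
  -- ψ = Φ φ
  have hψφ : Φ φ = ψ := by
    ext s
    rw [hψ s]
    show T (φ s) = _
    rw [hTval]
    exact tsum_congr fun n => by rw [hφ s n]
  -- goal function = Φ G
  have hgoal : Φ G = (⟨fun s => g s • h 0, by continuity⟩ : C(ℝ, B)) := by
    ext s
    show T (G s) = g s • h 0
    rw [hG s, hTval]
    rw [tsum_eq_single 0 (fun n hn => by
      rw [lp.single_apply_ne 1 0 _ hn, zero_smul])]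
    rw [lp.single_apply_self]
  -- translates commute
  have htrans : ∀ t, Φ (translateBy φ t) = translateBy (Φ φ) t := fun t => rfl
  have hsub : Φ '' (Submodule.span ℂ (Set.range (translateBy φ)) : Set _) ⊆
      (Submodule.span ℂ (Set.range (translateBy ψ)) : Set (C(ℝ, B))) := by
    have : Submodule.map L (Submodule.span ℂ (Set.range (translateBy φ))) ≤
        Submodule.span ℂ (Set.range (translateBy ψ)) := by
      rw [Submodule.map_span, Submodule.span_le]
      rintro _ ⟨_, ⟨t, rfl⟩, rfl⟩
      refine Submodule.subset_span ⟨t, ?_⟩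
      show translateBy ψ t = Φ (translateBy φ t)
      rw [htrans t, hψφ]
    intro x hx
    obtain ⟨y, hy, rfl⟩ := hx
    exact this ⟨y, hy, rfl⟩
  rw [← hgoal]
  have : Φ G ∈ closure (Φ '' (Submodule.span ℂ (Set.range (translateBy φ)) : Set _)) :=
    (image_closure_subset_closure_image hΦcont) ⟨G, hGmem, rfl⟩
  exact closure_mono hsub this
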